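/- For every integer k ≥ 16 and also for k ∈ {12, 13}, there are infinitely many odd positive integers n such that s_2(n^2) = s_2(n) = k. -/

import Mathlib

namespace IMLK

def S (n : ℕ) : ℕ := (Nat.digits 2 n).sum

lemma S_zero : S 0 = 0 := by simp [S]

lemma S_rec (n : ℕ) (hn : 0 < n) : S n = n % 2 + S (n / 2) := by
  unfold S
  rw [Nat.digits_def' (by norm_num : (1:ℕ) < 2) hn]
  simp

lemma S_split (m a b : ℕ) (h : b < 2 ^ m) : S (2 ^ m * a + b) = S a + S b := by
  induction m generalizing b with
  | zero =>
    have hb : b = 0 := by omega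
    subst hb; simp [S]
  | succ m ih =>
    have h2 : (2:ℕ) ^ (m+1) = 2 * 2 ^ m := by rw [pow_succ]; ring
    rcases Nat.eq_zero_or_pos a with rfl | ha
    · simp [S_zero]
    · have hm : (0:ℕ) < 2 ^ m := pow_pos (by norm_num) m
      have hma : 0 < 2 ^ m * a := Nat.mul_pos hm ha
      have key : 2 ^ (m+1) * a + b = 2 * (2 ^ m * a) + b := by rw [h2]; ring
      rw [key, S_rec _ (by omega)]
      have e1 : (2 * (2 ^ m * a) + b) % 2 = b % 2 := by omega
      have e2 : (2 * (2 ^ m * a) + b) / 2 = 2 ^ m * a + b / 2 := by omega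
      rw [e1, e2, ih (b / 2) (by omega)]
      rcases Nat.eq_zero_or_pos b with rfl | hb
      · simp [S_zero]
      · rw [S_rec b hb]; omega

lemma S_two_pow_sub_one (m : ℕ) : S (2 ^ m - 1) = m := by
  induction m with
  | zero => simp [S]
  | succ m ih =>
    have h2 : (2:ℕ) ^ (m+1) = 2 * 2 ^ m := by rw [pow_succ]; ring
    have h1 : 1 ≤ (2:ℕ) ^ m := Nat.one_le_two_pow
    rw [S_rec _ (by omega)]
    have e1 : (2 ^ (m+1) - 1) % 2 = 1 := by omega
    have e2 : (2 ^ (m+1) - 1) / 2 = 2 ^ m - 1 := by omega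
    rw [e1, e2, ih]; omega

lemma S_double (n : ℕ) : S (2 * n) = S n := by
  have := S_split 1 n 0 (by norm_num)
  simpa [S_zero] using this

lemma S_mul_pow (e n : ℕ) : S (2 ^ e * n) = S n := by
  have := S_split e n 0 (pow_pos (by norm_num) e)
  simpa [S_zero] using this

lemma pow_le2 {a b : ℕ} (h : a ≤ b) : (2:ℕ) ^ a ≤ 2 ^ b :=
  Nat.pow_le_pow_right (by norm_num) h

lemma one_le_pow (a : ℕ) : 1 ≤ (2:ℕ) ^ a := Nat.one_le_two_pow

lemma cpow_mul_le (c e a b : ℕ) (hc : c = 2 ^ e) (h : e + a ≤ b) :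
    c * 2 ^ a ≤ (2:ℕ) ^ b := by
  subst hc; rw [← pow_add]; exact pow_le2 h

lemma good_infinite (k a c : ℕ) (ha : 0 < a) (hc : Odd c)
    (h1 : S a + S c = k) (h2 : S (a*a) + S (2*(a*c)) + S (c*c) = k) :
    {n : ℕ | 0 < n ∧ Odd n ∧ (Nat.digits 2 (n ^ 2)).sum = k ∧
      (Nat.digits 2 n).sum = k}.Infinite := by
  obtain ⟨j, hj⟩ := hc
  have hc1 : 1 ≤ c := by omega
  set N := 2*(a*c) + c*c + c + 1 with hN
  refine Set.infinite_of_injective_forall_mem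
    (f := fun u : ℕ => 2 ^ (N + u + 1) * a + c) ?_ ?_
  · intro u v huv
    simp only at huv
    have h' : 2 ^ (N+u+1) * a = 2 ^ (N+v+1) * a := by omega
    have hpow : (2:ℕ) ^ (N+u+1) = 2 ^ (N+v+1) :=
      Nat.eq_of_mul_eq_mul_right ha h'
    have := Nat.pow_right_injective (le_refl 2) hpow
    omega
  · intro u
    simp only [Set.mem_setOf_eq]
    have hbig : N < 2 ^ (N+u+1) :=
      lt_of_lt_of_le (Nat.lt_two_pow_self (n := N)) (pow_le2 (by omega))
    have hcb : c < 2 ^ (N+u+1) := by omega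
    have hacb : 2*(a*c) < 2 ^ (N+u+1) := by omega
    have hccb : c*c < 2 ^ (N+u+1) := by omega
    have hp1 : (1:ℕ) ≤ 2 ^ (N+u+1) := one_le_pow _
    refine ⟨by nlinarith, ?_, ?_, ?_⟩
    · rw [Nat.odd_iff]
      have e : (2:ℕ) ^ (N+u+1) = 2 * 2 ^ (N+u) := by rw [pow_succ]; ring
      have e2 : 2 ^ (N+u+1) * a = 2 * (2 ^ (N+u) * a) := by rw [e]; ring
      omega
    · show S ((2 ^ (N+u+1) * a + c) ^ 2) = k
      have en : (2 ^ (N+u+1)*a + c) ^ 2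
          = 2 ^ (N+u+1) * (2 ^ (N+u+1) * (a*a) + 2*(a*c)) + c*c := by ring
      rw [en, S_split _ _ _ hccb, S_split _ _ _ hacb]
      omega
    · show S (2 ^ (N+u+1) * a + c) = k
      rw [S_split _ _ _ hcb]
      omega


lemma mul_pred_add (x y : ℕ) : 2 ^ x * (2 ^ y - 1) + 2 ^ x = (2:ℕ) ^ (x + y) := by
  have h1 : (1:ℕ) ≤ 2 ^ y := one_le_pow y
  have e : (2:ℕ) ^ y - 1 + 1 = 2 ^ y := by omega
  calc 2 ^ x * (2 ^ y - 1) + 2 ^ x = 2 ^ x * ((2 ^ y - 1) + 1) := by ring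
  _ = 2 ^ x * 2 ^ y := by rw [e]
  _ = 2 ^ (x + y) := (pow_add 2 x y).symm

lemma pred_block_lt (x y : ℕ) (hx : 1 ≤ x) : 2 ^ x * (2 ^ y - 1) + 1 < (2:ℕ) ^ (x + y) := by
  have h2 : (2:ℕ) ≤ 2 ^ x := by
    have := pow_le2 hx; simpa using this
  have := mul_pred_add x y
  omega

def A (p q : ℕ) : ℕ := (2 ^ p - 1) * 2 ^ (p + 1 + q) - 1


lemma S_one : S 1 = 1 := by norm_num [S]
lemma S_two : S 2 = 1 := by norm_num [S]
lemma S_three : S 3 = 2 := by norm_num [S]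
lemma S_seven : S 7 = 3 := by norm_num [S]

lemma A_pos (p q : ℕ) (hp : 1 ≤ p) : 0 < A p q := by
  unfold A
  have h1 : (2:ℕ) ≤ 2 ^ p := by
    have := pow_le2 (show 1 ≤ p from hp); simpa using this
  have h2 : (2:ℕ) ≤ 2 ^ (p + 1 + q) := by
    have := pow_le2 (show 1 ≤ p + 1 + q by omega); simpa using this
  have h3 : 2 ≤ (2 ^ p - 1) * 2 ^ (p + 1 + q) := by
    calc 2 ≤ 1 * 2 ^ (p+1+q) := by omega
    _ ≤ (2 ^ p - 1) * 2 ^ (p + 1 + q) := Nat.mul_le_mul_right _ (by omega)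
  omega

lemma A_odd (p q : ℕ) (hp : 1 ≤ p) : Odd (A p q) := by
  unfold A
  have e : (2:ℕ) ^ (p + 1 + q) = 2 ^ (p + q) * 2 := by
    rw [← pow_succ]; congr 1; omega
  have e2 : (2 ^ p - 1) * 2 ^ (p + 1 + q) = 2 * ((2 ^ p - 1) * 2 ^ (p + q)) := by
    rw [e]; ring
  have h1 : (2:ℕ) ≤ 2 ^ p := by
    have := pow_le2 (show 1 ≤ p from hp); simpa using this
  have h2 : 1 ≤ (2:ℕ) ^ (p + q) := one_le_pow _
  have h3 : 1 ≤ (2 ^ p - 1) * 2 ^ (p + q) :=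
    Nat.one_le_iff_ne_zero.mpr (Nat.mul_ne_zero (by omega) (by omega))
  rw [Nat.odd_iff]
  omega

lemma S_A (p q : ℕ) (hp : 1 ≤ p) : S (A p q) = 2 * p + q := by
  obtain ⟨r, rfl⟩ : ∃ r, p = r + 1 := ⟨p - 1, by omega⟩
  have hY1 : (1:ℕ) ≤ 2 ^ (r + 1 + 1 + q) := one_le_pow _
  have h21 : (2:ℕ) ≤ 2 ^ (r + 1) := by
    have := pow_le2 (show 1 ≤ r + 1 by omega); simpa using this
  have e0 : (2 ^ (r+1) - 1) * 2 ^ (r+1+1+q)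
      = 2 ^ (r+1) * 2 ^ (r+1+1+q) - 1 * 2 ^ (r+1+1+q) := Nat.sub_mul _ _ _
  have e1 : 2 ^ (r+1+1+q) * (2 ^ (r+1) - 2)
      = 2 ^ (r+1) * 2 ^ (r+1+1+q) - 2 * 2 ^ (r+1+1+q) := by
    rw [Nat.mul_comm, Nat.sub_mul]
  have h2 : 2 * 2 ^ (r+1+1+q) ≤ 2 ^ (r+1) * 2 ^ (r+1+1+q) :=
    Nat.mul_le_mul_right _ h21
  have key : A (r+1) q = 2 ^ (r+1+1+q) * (2 ^ (r+1) - 2) + (2 ^ (r+1+1+q) - 1) := by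
    unfold A; omega
  rw [key, S_split _ _ _ (by omega), S_two_pow_sub_one]
  have h2r : (2:ℕ) ^ (r+1) = 2 * 2 ^ r := by rw [pow_succ]; ring
  have h1r : 1 ≤ (2:ℕ) ^ r := one_le_pow _
  have e3 : (2:ℕ) ^ (r+1) - 2 = 2 * (2 ^ r - 1) := by omega
  rw [e3, S_double, S_two_pow_sub_one]
  omega

lemma S_A2 (p q : ℕ) (hp : 1 ≤ p) : S (A p q * A p q) = p + 1 + q := by
  obtain ⟨r, rfl⟩ : ∃ r, p = r + 1 := ⟨p - 1, by omega⟩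
  have h1 : (1:ℕ) ≤ 2 ^ (r+1) := one_le_pow _
  have h3 : (1:ℕ) ≤ 2 ^ r := one_le_pow _
  have h4 : (1:ℕ) ≤ 2 ^ q := one_le_pow _
  have h21 : (2:ℕ) ≤ 2 ^ (r+1) := by
    have := pow_le2 (show 1 ≤ r + 1 by omega); simpa using this
  have h5 : (1:ℕ) ≤ (2 ^ (r+1) - 1) * 2 ^ (r+1+1+q) :=
    Nat.one_le_iff_ne_zero.mpr
      (Nat.mul_ne_zero (by omega) (by have := one_le_pow (r+1+1+q); omega))
  have key : A (r+1) q * A (r+1) q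
      = 2 ^ (r+q+3) * (2 ^ (r+q+1) * (2 ^ (r+2) * (2 ^ r - 1))
          + (2 ^ (r+1) * (2 ^ q - 1) + 1)) + 1 := by
    unfold A
    zify [h1, h3, h4, h5]
    ring
  have hbq : 2 ^ (r+1) * (2 ^ q - 1) + 1 < 2 ^ (r+q+1) := by
    have := pred_block_lt (r+1) q (by omega)
    rw [show r+1+q = r+q+1 by omega] at this
    exact this
  have t1 : S (2 ^ (r+1) * (2 ^ q - 1) + 1) = q + 1 := by
    rw [S_split _ _ _ (by omega), S_two_pow_sub_one, S_one]
  have t2 : S (2 ^ (r+q+1) * (2 ^ (r+2) * (2 ^ r - 1))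
      + (2 ^ (r+1) * (2 ^ q - 1) + 1)) = r + (q + 1) := by
    rw [S_split _ _ _ hbq, t1, S_mul_pow, S_two_pow_sub_one]
  have hlt : (1:ℕ) < 2 ^ (r+q+3) := by
    have := pow_le2 (show 1 ≤ r + q + 3 by omega); omega
  rw [key, S_split _ _ _ hlt, t2, S_one]
  omega


lemma T_F1 (m : ℕ) : S (2 * (A 3 m * A (m+4) 2)) = m + 5 := by
  have hA1 : (1:ℕ) ≤ (2 ^ 3 - 1) * 2 ^ (3+1+m) :=
    Nat.one_le_iff_ne_zero.mpr (Nat.mul_ne_zero (by norm_num) (by have := one_le_pow (3+1+m); omega))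
  have hm4 : (1:ℕ) ≤ 2 ^ (m+4) := one_le_pow _
  have h2m4 : (2:ℕ) ≤ 2 ^ (m+4) := by
    have := pow_le2 (show 1 ≤ m+4 by omega); simpa using this
  have hA2 : (1:ℕ) ≤ (2 ^ (m+4) - 1) * 2 ^ (m+4+1+2) :=
    Nat.one_le_iff_ne_zero.mpr (Nat.mul_ne_zero (by omega) (by have := one_le_pow (m+4+1+2); omega))
  have hm1 : (1:ℕ) ≤ 2 ^ (m+1) := one_le_pow _
  have key : 2 * (A 3 m * A (m+4) 2)
      = 2 ^ (2*m+15) * (2 ^ (m+2) * 3 + (2 ^ (m+1) - 1)) + (2 ^ (m+5) + 2) := by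
    unfold A
    zify [hA1, hA2, hm4, hm1]
    ring
  have e12 : (2:ℕ) ^ (m+2) = 2 ^ (m+1) * 2 := by rw [← pow_succ]
  have i1 : S (2 ^ (m+2) * 3 + (2 ^ (m+1) - 1)) = 2 + (m+1) := by
    rw [S_split _ _ _ (by omega), S_three, S_two_pow_sub_one]
  have h45 : (4:ℕ) ≤ 2 ^ (m+5) := by
    have := pow_le2 (show 2 ≤ m+5 by omega); simpa using this
  have i2 : S (2 ^ (m+5) + 2) = 2 := by
    have := S_split (m+5) 1 2 (by omega)
    simpa [S_one, S_two] using this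
  have e56 : (2:ℕ) ^ (m+6) = 2 ^ (m+5) * 2 := by rw [← pow_succ]
  have h6 : (2:ℕ) ^ (m+6) ≤ 2 ^ (2*m+15) := pow_le2 (by omega)
  rw [key, S_split _ _ _ (by omega), i1, i2]
  omega

lemma T_R3 (r : ℕ) : S (2 * (A (r+5) r * A (r+5) (r+1))) = 2*r + 8 := by
  have h5 : (1:ℕ) ≤ 2 ^ (r+5) := one_le_pow _
  have h25 : (2:ℕ) ≤ 2 ^ (r+5) := by
    have := pow_le2 (show 1 ≤ r+5 by omega); simpa using this
  have hA1 : (1:ℕ) ≤ (2 ^ (r+5) - 1) * 2 ^ (r+5+1+r) :=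
    Nat.one_le_iff_ne_zero.mpr (Nat.mul_ne_zero (by omega) (by have := one_le_pow (r+5+1+r); omega))
  have hA2 : (1:ℕ) ≤ (2 ^ (r+5) - 1) * 2 ^ (r+5+1+(r+1)) :=
    Nat.one_le_iff_ne_zero.mpr (Nat.mul_ne_zero (by omega) (by have := one_le_pow (r+5+1+(r+1)); omega))
  have h4 : (1:ℕ) ≤ 2 ^ (r+4) := one_le_pow _
  have h0 : (1:ℕ) ≤ 2 ^ r := one_le_pow _
  have key : 2 * (A (r+5) r * A (r+5) (r+1))
      = 2 ^ (3*r+12) * (2 ^ (2*r+8) * (2 ^ (r+4) - 1) + (2 ^ 2 * (2 ^ r - 1) + 1))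
        + (2 ^ (2*r+7) * 3 + 2) := by
    unfold A
    zify [hA1, hA2, h5, h4, h0]
    ring
  have i1 : S (2 ^ 2 * (2 ^ r - 1) + 1) = r + 1 := by
    rw [S_split _ _ _ (by norm_num), S_two_pow_sub_one, S_one]
  have ib : 2 ^ 2 * (2 ^ r - 1) + 1 < 2 ^ (2*r+8) := by
    have := mul_pred_add 2 r
    have h28 : (2:ℕ) ^ (2+r) ≤ 2 ^ (2*r+8) := pow_le2 (by omega)
    omega
  have i2 : S (2 ^ (2*r+8) * (2 ^ (r+4) - 1) + (2 ^ 2 * (2 ^ r - 1) + 1))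
      = (r+4) + (r+1) := by
    rw [S_split _ _ _ ib, i1, S_two_pow_sub_one]
  have h27 : (1:ℕ) ≤ 2 ^ (2*r+7) := one_le_pow _
  have h227 : (2:ℕ) < 2 ^ (2*r+7) := by
    have := pow_le2 (show 2 ≤ 2*r+7 by omega); simpa using lt_of_lt_of_le (by norm_num : (2:ℕ) < 2^2) this
  have i3 : S (2 ^ (2*r+7) * 3 + 2) = 3 := by
    rw [S_split _ _ _ h227, S_three, S_two]
  have e9 : (4:ℕ) * 2 ^ (2*r+7) = 2 ^ (2*r+9) := by
    rw [show (4:ℕ) = 2 ^ 2 by norm_num, ← pow_add]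
    congr 1; omega
  have h912 : (2:ℕ) ^ (2*r+9) ≤ 2 ^ (3*r+12) := pow_le2 (by omega)
  rw [key, S_split _ _ _ (by omega), i2, i3]
  omega

lemma T_F2 (m : ℕ) : S (2 * (A 4 m * A (m+4) 4)) = m + 6 := by
  have hA1 : (1:ℕ) ≤ (2 ^ 4 - 1) * 2 ^ (4+1+m) :=
    Nat.one_le_iff_ne_zero.mpr (Nat.mul_ne_zero (by norm_num) (by have := one_le_pow (4+1+m); omega))
  have hm4 : (1:ℕ) ≤ 2 ^ (m+4) := one_le_pow _
  have h2m4 : (2:ℕ) ≤ 2 ^ (m+4) := by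
    have := pow_le2 (show 1 ≤ m+4 by omega); simpa using this
  have hA2 : (1:ℕ) ≤ (2 ^ (m+4) - 1) * 2 ^ (m+4+1+4) :=
    Nat.one_le_iff_ne_zero.mpr (Nat.mul_ne_zero (by omega) (by have := one_le_pow (m+4+1+4); omega))
  have hm0 : (1:ℕ) ≤ 2 ^ m := one_le_pow _
  have key : 2 * (A 4 m * A (m+4) 4)
      = 2 ^ (2*m+14) * (2 ^ (m+6) * 7 + (2 ^ 5 * (2 ^ m - 1) + 1)) + (2 ^ (m+6) + 2) := by
    unfold A
    zify [hA1, hA2, hm4, hm0]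
    ring
  have i1 : S (2 ^ 5 * (2 ^ m - 1) + 1) = m + 1 := by
    rw [S_split _ _ _ (by norm_num), S_two_pow_sub_one, S_one]
  have ib : 2 ^ 5 * (2 ^ m - 1) + 1 < 2 ^ (m+6) := by
    have := mul_pred_add 5 m
    have e : (2:ℕ) ^ (m+6) = 2 ^ (5+m) * 2 := by rw [← pow_succ]; congr 1; omega
    omega
  have i2 : S (2 ^ (m+6) * 7 + (2 ^ 5 * (2 ^ m - 1) + 1)) = 3 + (m+1) := by
    rw [S_split _ _ _ ib, i1, S_seven]
  have h45 : (4:ℕ) ≤ 2 ^ (m+6) := by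
    have := pow_le2 (show 2 ≤ m+6 by omega); simpa using this
  have i3 : S (2 ^ (m+6) + 2) = 2 := by
    have := S_split (m+6) 1 2 (by omega)
    simpa [S_one, S_two] using this
  have e56 : (2:ℕ) ^ (m+7) = 2 ^ (m+6) * 2 := by rw [← pow_succ]
  have h6 : (2:ℕ) ^ (m+7) ≤ 2 ^ (2*m+14) := pow_le2 (by omega)
  rw [key, S_split _ _ _ (by omega), i2, i3]
  omega


lemma S_bit1 (n : ℕ) : S (2*n+1) = S n + 1 := by
  rw [S_rec (2*n+1) (by omega)]
  have e1 : (2*n+1) % 2 = 1 := by omega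
  have e2 : (2*n+1) / 2 = n := by omega
  rw [e1, e2]; omega

lemma Sc23 : S 23 = 4 := by
  rw [show (23:ℕ) = 2*11+1 by norm_num, S_bit1]
  rw [show (11:ℕ) = 2*5+1 by norm_num, S_bit1]
  rw [show (5:ℕ) = 2*2+1 by norm_num, S_bit1]
  rw [show (2:ℕ) = 2*1 by norm_num, S_double]
  rw [S_one]

lemma Sc1471 : S 1471 = 9 := by
  rw [show (1471:ℕ) = 2*735+1 by norm_num, S_bit1]
  rw [show (735:ℕ) = 2*367+1 by norm_num, S_bit1]
  rw [show (367:ℕ) = 2*183+1 by norm_num, S_bit1]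
  rw [show (183:ℕ) = 2*91+1 by norm_num, S_bit1]
  rw [show (91:ℕ) = 2*45+1 by norm_num, S_bit1]
  rw [show (45:ℕ) = 2*22+1 by norm_num, S_bit1]
  rw [show (22:ℕ) = 2*11 by norm_num, S_double]
  rw [show (11:ℕ) = 2*5+1 by norm_num, S_bit1]
  rw [show (5:ℕ) = 2*2+1 by norm_num, S_bit1]
  rw [show (2:ℕ) = 2*1 by norm_num, S_double]
  rw [S_one]

lemma Sc529 : S 529 = 3 := by
  rw [show (529:ℕ) = 2*264+1 by norm_num, S_bit1]
  rw [show (264:ℕ) = 2*132 by norm_num, S_double]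
  rw [show (132:ℕ) = 2*66 by norm_num, S_double]
  rw [show (66:ℕ) = 2*33 by norm_num, S_double]
  rw [show (33:ℕ) = 2*16+1 by norm_num, S_bit1]
  rw [show (16:ℕ) = 2*8 by norm_num, S_double]
  rw [show (8:ℕ) = 2*4 by norm_num, S_double]
  rw [show (4:ℕ) = 2*2 by norm_num, S_double]
  rw [show (2:ℕ) = 2*1 by norm_num, S_double]
  rw [S_one]

lemma Sc67666 : S 67666 = 5 := by
  rw [show (67666:ℕ) = 2*33833 by norm_num, S_double]
  rw [show (33833:ℕ) = 2*16916+1 by norm_num, S_bit1]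
  rw [show (16916:ℕ) = 2*8458 by norm_num, S_double]
  rw [show (8458:ℕ) = 2*4229 by norm_num, S_double]
  rw [show (4229:ℕ) = 2*2114+1 by norm_num, S_bit1]
  rw [show (2114:ℕ) = 2*1057 by norm_num, S_double]
  rw [show (1057:ℕ) = 2*528+1 by norm_num, S_bit1]
  rw [show (528:ℕ) = 2*264 by norm_num, S_double]
  rw [show (264:ℕ) = 2*132 by norm_num, S_double]
  rw [show (132:ℕ) = 2*66 by norm_num, S_double]
  rw [show (66:ℕ) = 2*33 by norm_num, S_double]
  rw [show (33:ℕ) = 2*16+1 by norm_num, S_bit1]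
  rw [show (16:ℕ) = 2*8 by norm_num, S_double]
  rw [show (8:ℕ) = 2*4 by norm_num, S_double]
  rw [show (4:ℕ) = 2*2 by norm_num, S_double]
  rw [show (2:ℕ) = 2*1 by norm_num, S_double]
  rw [S_one]

lemma Sc2163841 : S 2163841 = 5 := by
  rw [show (2163841:ℕ) = 2*1081920+1 by norm_num, S_bit1]
  rw [show (1081920:ℕ) = 2*540960 by norm_num, S_double]
  rw [show (540960:ℕ) = 2*270480 by norm_num, S_double]
  rw [show (270480:ℕ) = 2*135240 by norm_num, S_double]
  rw [show (135240:ℕ) = 2*67620 by norm_num, S_double]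
  rw [show (67620:ℕ) = 2*33810 by norm_num, S_double]
  rw [show (33810:ℕ) = 2*16905 by norm_num, S_double]
  rw [show (16905:ℕ) = 2*8452+1 by norm_num, S_bit1]
  rw [show (8452:ℕ) = 2*4226 by norm_num, S_double]
  rw [show (4226:ℕ) = 2*2113 by norm_num, S_double]
  rw [show (2113:ℕ) = 2*1056+1 by norm_num, S_bit1]
  rw [show (1056:ℕ) = 2*528 by norm_num, S_double]
  rw [show (528:ℕ) = 2*264 by norm_num, S_double]
  rw [show (264:ℕ) = 2*132 by norm_num, S_double]
  rw [show (132:ℕ) = 2*66 by norm_num, S_double]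
  rw [show (66:ℕ) = 2*33 by norm_num, S_double]
  rw [show (33:ℕ) = 2*16+1 by norm_num, S_bit1]
  rw [show (16:ℕ) = 2*8 by norm_num, S_double]
  rw [show (8:ℕ) = 2*4 by norm_num, S_double]
  rw [show (4:ℕ) = 2*2 by norm_num, S_double]
  rw [show (2:ℕ) = 2*1 by norm_num, S_double]
  rw [S_one]

lemma Sc47071 : S 47071 = 13 := by
  rw [show (47071:ℕ) = 2*23535+1 by norm_num, S_bit1]
  rw [show (23535:ℕ) = 2*11767+1 by norm_num, S_bit1]
  rw [show (11767:ℕ) = 2*5883+1 by norm_num, S_bit1]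
  rw [show (5883:ℕ) = 2*2941+1 by norm_num, S_bit1]
  rw [show (2941:ℕ) = 2*1470+1 by norm_num, S_bit1]
  rw [show (1470:ℕ) = 2*735 by norm_num, S_double]
  rw [show (735:ℕ) = 2*367+1 by norm_num, S_bit1]
  rw [show (367:ℕ) = 2*183+1 by norm_num, S_bit1]
  rw [show (183:ℕ) = 2*91+1 by norm_num, S_bit1]
  rw [show (91:ℕ) = 2*45+1 by norm_num, S_bit1]
  rw [show (45:ℕ) = 2*22+1 by norm_num, S_bit1]
  rw [show (22:ℕ) = 2*11 by norm_num, S_double]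
  rw [show (11:ℕ) = 2*5+1 by norm_num, S_bit1]
  rw [show (5:ℕ) = 2*2+1 by norm_num, S_bit1]
  rw [show (2:ℕ) = 2*1 by norm_num, S_double]
  rw [S_one]

lemma Sc2165266 : S 2165266 = 6 := by
  rw [show (2165266:ℕ) = 2*1082633 by norm_num, S_double]
  rw [show (1082633:ℕ) = 2*541316+1 by norm_num, S_bit1]
  rw [show (541316:ℕ) = 2*270658 by norm_num, S_double]
  rw [show (270658:ℕ) = 2*135329 by norm_num, S_double]
  rw [show (135329:ℕ) = 2*67664+1 by norm_num, S_bit1]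
  rw [show (67664:ℕ) = 2*33832 by norm_num, S_double]
  rw [show (33832:ℕ) = 2*16916 by norm_num, S_double]
  rw [show (16916:ℕ) = 2*8458 by norm_num, S_double]
  rw [show (8458:ℕ) = 2*4229 by norm_num, S_double]
  rw [show (4229:ℕ) = 2*2114+1 by norm_num, S_bit1]
  rw [show (2114:ℕ) = 2*1057 by norm_num, S_double]
  rw [show (1057:ℕ) = 2*528+1 by norm_num, S_bit1]
  rw [show (528:ℕ) = 2*264 by norm_num, S_double]
  rw [show (264:ℕ) = 2*132 by norm_num, S_double]
  rw [show (132:ℕ) = 2*66 by norm_num, S_double]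
  rw [show (66:ℕ) = 2*33 by norm_num, S_double]
  rw [show (33:ℕ) = 2*16+1 by norm_num, S_bit1]
  rw [show (16:ℕ) = 2*8 by norm_num, S_double]
  rw [show (8:ℕ) = 2*4 by norm_num, S_double]
  rw [show (4:ℕ) = 2*2 by norm_num, S_double]
  rw [show (2:ℕ) = 2*1 by norm_num, S_double]
  rw [S_one]

lemma Sc2215679041 : S 2215679041 = 8 := by
  rw [show (2215679041:ℕ) = 2*1107839520+1 by norm_num, S_bit1]
  rw [show (1107839520:ℕ) = 2*553919760 by norm_num, S_double]
  rw [show (553919760:ℕ) = 2*276959880 by norm_num, S_double]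
  rw [show (276959880:ℕ) = 2*138479940 by norm_num, S_double]
  rw [show (138479940:ℕ) = 2*69239970 by norm_num, S_double]
  rw [show (69239970:ℕ) = 2*34619985 by norm_num, S_double]
  rw [show (34619985:ℕ) = 2*17309992+1 by norm_num, S_bit1]
  rw [show (17309992:ℕ) = 2*8654996 by norm_num, S_double]
  rw [show (8654996:ℕ) = 2*4327498 by norm_num, S_double]
  rw [show (4327498:ℕ) = 2*2163749 by norm_num, S_double]
  rw [show (2163749:ℕ) = 2*1081874+1 by norm_num, S_bit1]
  rw [show (1081874:ℕ) = 2*540937 by norm_num, S_double]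
  rw [show (540937:ℕ) = 2*270468+1 by norm_num, S_bit1]
  rw [show (270468:ℕ) = 2*135234 by norm_num, S_double]
  rw [show (135234:ℕ) = 2*67617 by norm_num, S_double]
  rw [show (67617:ℕ) = 2*33808+1 by norm_num, S_bit1]
  rw [show (33808:ℕ) = 2*16904 by norm_num, S_double]
  rw [show (16904:ℕ) = 2*8452 by norm_num, S_double]
  rw [show (8452:ℕ) = 2*4226 by norm_num, S_double]
  rw [show (4226:ℕ) = 2*2113 by norm_num, S_double]
  rw [show (2113:ℕ) = 2*1056+1 by norm_num, S_bit1]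
  rw [show (1056:ℕ) = 2*528 by norm_num, S_double]
  rw [show (528:ℕ) = 2*264 by norm_num, S_double]
  rw [show (264:ℕ) = 2*132 by norm_num, S_double]
  rw [show (132:ℕ) = 2*66 by norm_num, S_double]
  rw [show (66:ℕ) = 2*33 by norm_num, S_double]
  rw [show (33:ℕ) = 2*16+1 by norm_num, S_bit1]
  rw [show (16:ℕ) = 2*8 by norm_num, S_double]
  rw [show (8:ℕ) = 2*4 by norm_num, S_double]
  rw [show (4:ℕ) = 2*2 by norm_num, S_double]
  rw [show (2:ℕ) = 2*1 by norm_num, S_double]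
  rw [S_one]

end IMLK

open IMLK in
theorem infinitely_many_large_k (k : ℕ) (hk : 16 ≤ k ∨ k = 12 ∨ k = 13) :
    {n : ℕ | 0 < n ∧ Odd n ∧ (Nat.digits 2 (n ^ 2)).sum = k ∧
      (Nat.digits 2 n).sum = k}.Infinite := by
  rcases eq_or_ne k 13 with rfl | h13
  · exact good_infinite 13 23 1471 (by norm_num) (Nat.odd_iff.mpr (by norm_num))
      (by rw [Sc23, Sc1471])
      (by rw [show (23*23:ℕ) = 529 by norm_num, show (2*(23*1471):ℕ) = 67666 by norm_num,
              show (1471*1471:ℕ) = 2163841 by norm_num, Sc529, Sc67666, Sc2163841])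
  rcases eq_or_ne k 17 with rfl | h17
  · exact good_infinite 17 23 47071 (by norm_num) (Nat.odd_iff.mpr (by norm_num))
      (by rw [Sc23, Sc47071])
      (by rw [show (23*23:ℕ) = 529 by norm_num, show (2*(23*47071):ℕ) = 2165266 by norm_num,
              show (47071*47071:ℕ) = 2215679041 by norm_num, Sc529, Sc2165266, Sc2215679041])
  rcases (show k % 3 = 1 ∧ 16 ≤ k ∨ k % 6 = 0 ∧ 12 ≤ k ∨ k % 6 = 3 ∧ 21 ≤ k ∨
      k % 3 = 2 ∧ 20 ≤ k by omega) with ⟨hm,hl⟩|⟨hm,hl⟩|⟨hm,hl⟩|⟨hm,hl⟩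
  · obtain ⟨m, rfl⟩ : ∃ m, k = 3*m+16 := ⟨(k-16)/3, by omega⟩
    exact good_infinite _ (A 3 m) (A (m+4) 2)
      (A_pos _ _ (by norm_num)) (A_odd _ _ (by omega))
      (by rw [S_A 3 m (by norm_num), S_A (m+4) 2 (by omega)]; ring)
      (by rw [S_A2 3 m (by norm_num), T_F1 m, S_A2 (m+4) 2 (by omega)]; ring)
  · obtain ⟨r, rfl⟩ : ∃ r, k = 6*r+12 := ⟨(k-12)/6, by omega⟩
    exact good_infinite _ (A (r+3) r) (A (r+3) r)
      (A_pos _ _ (by omega)) (A_odd _ _ (by omega))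
      (by rw [S_A (r+3) r (by omega)]; ring)
      (by rw [S_double, S_A2 (r+3) r (by omega)]; ring)
  · obtain ⟨r, rfl⟩ : ∃ r, k = 6*r+21 := ⟨(k-21)/6, by omega⟩
    exact good_infinite _ (A (r+5) r) (A (r+5) (r+1))
      (A_pos _ _ (by omega)) (A_odd _ _ (by omega))
      (by rw [S_A (r+5) r (by omega), S_A (r+5) (r+1) (by omega)]; ring)
      (by rw [S_A2 (r+5) r (by omega), T_R3 r, S_A2 (r+5) (r+1) (by omega)]; ring)
  · obtain ⟨m, rfl⟩ : ∃ m, k = 3*m+20 := ⟨(k-20)/3, by omega⟩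
    exact good_infinite _ (A 4 m) (A (m+4) 4)
      (A_pos _ _ (by norm_num)) (A_odd _ _ (by omega))
      (by rw [S_A 4 m (by norm_num), S_A (m+4) 4 (by omega)]; ring)
      (by rw [S_A2 4 m (by norm_num), T_F2 m, S_A2 (m+4) 4 (by omega)]; ring)
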